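/- Let G be a k-connected graph on n vertices with k ≥ (n − 2)/3. Then every two longest paths in G intersect in at least k vertices. -/

import Mathlib

/-- A graph is `k`-connected if it has more than `k` vertices and deleting any set of
fewer than `k` vertices leaves a connected graph. -/
def KConnected {V : Type*} [Fintype V] (G : SimpleGraph V) (k : ℕ) : Prop :=
  k < Fintype.card V ∧
    ∀ S : Set V, S.ncard < k → (G.induce Sᶜ).Connected

open SimpleGraph

section Aux

variable {V : Type*} {G : SimpleGraph V}

/-- If a walk starts outside a list and ends in it, there is a crossing edge. -/
lemma aux_crossing (L : List V) {a b : V} (W : G.Walk a b) :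
    a ∉ L → b ∈ L → ∃ x y, G.Adj x y ∧ x ∉ L ∧ y ∈ L := by
  induction W with
  | nil => intro h1 h2; exact absurd h2 h1
  | @cons a c b h q ih =>
    intro h1 h2
    by_cases hc : c ∈ L
    · exact ⟨a, c, h, h1, hc⟩
    · exact ih hc h2

lemma aux_dart_snd {a b : V} (W : G.Walk a b) (x : V) :
    x ∈ W.support → x ≠ a → ∃ d ∈ W.darts, d.snd = x := by
  induction W with
  | nil => intro h1 h2; simp at h1; exact absurd h1 h2
  | @cons a c b h q ih =>
    intro h1 h2
    by_cases hxc : x = c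
    · subst hxc
      exact ⟨⟨(a, x), h⟩, by simp [Walk.darts_cons], rfl⟩
    · have hx : x ∈ q.support := by
        rcases (by simpa [Walk.support_cons] using h1 : x = a ∨ x ∈ q.support) with h' | h'
        · exact absurd h' h2
        · exact h'
      obtain ⟨d, hd1, hd2⟩ := ih hx hxc
      exact ⟨d, by simp [Walk.darts_cons, hd1], hd2⟩

lemma aux_dart_fst {a b : V} (W : G.Walk a b) (x : V) :
    x ∈ W.support → x ≠ b → ∃ d ∈ W.darts, d.fst = x := by
  intro h1 h2
  obtain ⟨d, hd1, hd2⟩ := aux_dart_snd W.reverse x (by simpa using h1) h2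
  refine ⟨d.symm, Walk.mem_darts_reverse.mp hd1, ?_⟩
  simpa using hd2

lemma aux_split {a b : V} (W : G.Walk a b) (d : G.Dart) :
    d ∈ W.darts → ∃ (T : G.Walk a d.fst) (D : G.Walk d.snd b),
      W = T.append (Walk.cons d.adj D) := by
  induction W with
  | nil => simp
  | @cons a c b h q ih =>
    intro hd
    rw [Walk.darts_cons, List.mem_cons] at hd
    rcases hd with rfl | hd
    · exact ⟨Walk.nil, q, rfl⟩
    · obtain ⟨T, D, rfl⟩ := ih hd
      exact ⟨Walk.cons h T, D, rfl⟩

variable [Fintype V]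

/-- A `k`-connected graph has minimum degree at least `k`. -/
lemma aux_mindeg {k : ℕ} (hconn : KConnected G k) (v : V) :
    k ≤ (G.neighborSet v).ncard := by
  by_contra hlt
  push_neg at hlt
  have h2 := hconn.2 (G.neighborSet v) hlt
  have hv : v ∈ (G.neighborSet v)ᶜ := by simp
  -- find u ∉ neighborSet v with u ≠ v
  have : ∃ u, u ∉ insert v (G.neighborSet v) := by
    by_contra hall
    push_neg at hall
    have huniv : (Set.univ : Set V) ⊆ insert v (G.neighborSet v) := fun u _ => hall u
    have hcard : (Set.univ : Set V).ncard ≤ (insert v (G.neighborSet v)).ncard :=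
      Set.ncard_le_ncard huniv (Set.toFinite _)
    have h3 : (insert v (G.neighborSet v)).ncard ≤ (G.neighborSet v).ncard + 1 :=
      Set.ncard_insert_le _ _
    rw [Set.ncard_univ, Nat.card_eq_fintype_card] at hcard
    have := hconn.1
    omega
  obtain ⟨u, hu⟩ := this
  simp only [Set.mem_insert_iff, not_or] at hu
  have huc : u ∈ (G.neighborSet v)ᶜ := hu.2
  obtain ⟨W⟩ := h2.preconnected ⟨v, hv⟩ ⟨u, huc⟩
  have hne : (⟨v, hv⟩ : ((G.neighborSet v)ᶜ : Set V)) ≠ ⟨u, huc⟩ := by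
    simp [Subtype.ext_iff]; exact fun h => hu.1 h.symm
  obtain ⟨x, hadj, q, -⟩ := Walk.not_nil_iff.mp (Walk.not_nil_of_ne (p := W) hne)
  exact x.2 (hadj : G.Adj v x.val)

lemma aux_connected {k : ℕ} (hconn : KConnected G k) (hk : 1 ≤ k) : G.Connected := by
  have h := hconn.2 ∅ (by simp; omega)
  rw [Set.compl_empty] at h
  have hne : Nonempty V := by
    have := hconn.1
    exact Fintype.card_pos_iff.mp (by omega)
  have hprec : G.Preconnected := by
    intro x y
    have := h.preconnected ⟨x, trivial⟩ ⟨y, trivial⟩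
    exact this.map (SimpleGraph.Embedding.induce Set.univ).toHom
  exact @SimpleGraph.Connected.mk _ _ hprec hne

/-- All neighbors of the start of a longest path lie on the path. -/
lemma aux_nbrs_on_path {u v : V} {P : G.Walk u v} (hP : P.IsPath)
    (hmax : ∀ (a b : V) (W : G.Walk a b), W.IsPath → W.length ≤ P.length)
    {x : V} (hx : G.Adj u x) : x ∈ P.support := by
  by_contra hns
  have hpath : (Walk.cons hx.symm P).IsPath := (Walk.cons_isPath_iff _ _).mpr ⟨hP, hns⟩
  have := hmax _ _ _ hpath
  simp [Walk.length_cons] at this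

lemma aux_support_card_lb [DecidableEq V] {k : ℕ} (hconn : KConnected G k)
    {u v : V} {P : G.Walk u v} (hP : P.IsPath)
    (hmax : ∀ (a b : V) (W : G.Walk a b), W.IsPath → W.length ≤ P.length) :
    k + 1 ≤ P.support.toFinset.card := by
  classical
  have h1 : k ≤ (G.neighborSet u).ncard := aux_mindeg hconn u
  have hfin : (G.neighborSet u).Finite := Set.toFinite _
  have hNu : hfin.toFinset.card = (G.neighborSet u).ncard :=
    (Set.ncard_eq_toFinset_card _ hfin).symm
  have hsub : insert u hfin.toFinset ⊆ P.support.toFinset := by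
    intro x hx
    rcases Finset.mem_insert.mp hx with rfl | hx
    · exact List.mem_toFinset.mpr P.start_mem_support
    · exact List.mem_toFinset.mpr (aux_nbrs_on_path hP hmax (hfin.mem_toFinset.mp hx))
  have hu : u ∉ hfin.toFinset := by simp [hfin.mem_toFinset]
  have := Finset.card_le_card hsub
  rw [Finset.card_insert_of_notMem hu] at this
  omega

end Aux

section StepB

variable {V : Type*} [Fintype V] {G : SimpleGraph V}

/-- Key lemma: a longest path with at most `2k` vertices in a `k`-connected graph
(`k ≥ 1`) passes through every vertex. -/
lemma aux_spanning {k : ℕ} (hconn : KConnected G k) (hk : 1 ≤ k)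
    {u v : V} (P : G.Walk u v) (hP : P.IsPath)
    (hmax : ∀ (a b : V) (W : G.Walk a b), W.IsPath → W.length ≤ P.length)
    (hshort : P.length + 1 ≤ 2 * k) (y : V) : y ∈ P.support := by
  classical
  by_contra hy
  set m := P.length with hm
  have hGconn : G.Connected := aux_connected hconn hk
  obtain ⟨W0⟩ := hGconn.preconnected y u
  obtain ⟨a, b, hab, haL, hbL⟩ := aux_crossing P.support W0 hy P.start_mem_support
  have hsuppnd : P.support.Nodup := hP.support_nodup
  -- lower bound on m
  have hlb : k + 1 ≤ P.support.toFinset.card := aux_support_card_lb hconn hP hmax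
  have hlen : P.support.length = m + 1 := P.length_support
  have hmk : k ≤ m := by
    have := List.toFinset_card_le P.support
    omega
  -- the symmetric neighbor fact for v
  have hmaxrev : ∀ (a b : V) (W : G.Walk a b), W.IsPath → W.length ≤ P.reverse.length := by
    intro a b W hW; rw [Walk.length_reverse]; exact hmax a b W hW
  have hnbrv : ∀ x, G.Adj v x → x ∈ P.support := by
    intro x hx
    have := aux_nbrs_on_path (P := P.reverse) hP.reverse hmaxrev hx
    simpa using this
  rcases Nat.lt_or_ge m 2 with hm2 | hm2
  · -- m = 1 (m ≥ k ≥ 1): support = [u, v]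
    have hm1 : m = 1 := by omega
    have huv : u ≠ v := by
      intro h
      subst h
      have := (Walk.isPath_iff_eq_nil (p := P)).mp hP
      subst this
      simp [hm] at hm1
    have hsupp : P.support = [u, v] := by
      have h1 : P.support.length = 2 := by omega
      have h2 : P.support = u :: P.support.tail := P.support_eq_cons
      have h3 : P.support.tail.length = 1 := by
        rw [h2] at h1; simpa using h1
      obtain ⟨c, hc⟩ := List.length_eq_one_iff.mp h3
      have hv : v ∈ P.support := P.end_mem_support
      rw [h2, hc] at hv
      simp only [List.mem_cons, List.mem_singleton, List.not_mem_nil, or_false] at hv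
      rcases hv with h | h
      · exact absurd h.symm huv
      · rw [h2, hc, h]
    rw [hsupp] at hbL haL
    simp only [List.mem_cons, List.mem_singleton, List.not_mem_nil, or_false] at hbL
    rcases hbL with rfl | rfl
    · have hpath : (Walk.cons hab P).IsPath := by
        refine (Walk.cons_isPath_iff _ _).mpr ⟨hP, ?_⟩
        rw [hsupp]; exact haL
      have := hmax _ _ _ hpath
      simp [Walk.length_cons, ← hm] at this
    · have hpath : (Walk.cons hab P.reverse).IsPath := by
        refine (Walk.cons_isPath_iff _ _).mpr ⟨hP.reverse, ?_⟩
        rw [Walk.support_reverse, List.mem_reverse, hsupp]; exact haL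
      have := hmax _ _ _ hpath
      simp [Walk.length_cons, Walk.length_reverse, ← hm] at this
  · -- main case m ≥ 2 : find a crossing dart and build a spanning cycle
    have hdnodup : P.darts.Nodup := by
      have hed : P.edges.Nodup := hP.isTrail.edges_nodup
      exact List.Nodup.of_map Dart.edge (hed : (P.darts.map Dart.edge).Nodup)
    have hdlen : P.darts.length = m := P.length_darts
    have hdne : P.darts ≠ [] := by
      intro h; rw [h] at hdlen; simp at hdlen; omega
    obtain ⟨d₀, hd₀⟩ := List.exists_mem_of_ne_nil _ hdne
    set DF : Finset G.Dart := P.darts.toFinset with hDF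
    have hDFcard : DF.card = m := by
      rw [hDF, List.toFinset_card_of_nodup hdnodup, hdlen]
    set A : Finset G.Dart := DF.filter (fun d => G.Adj u d.snd) with hA
    set B : Finset G.Dart := DF.filter (fun d => G.Adj v d.fst) with hB
    -- k ≤ A.card
    have hfinu : (G.neighborSet u).Finite := Set.toFinite _
    have hfinv : (G.neighborSet v).Finite := Set.toFinite _
    set f : V → G.Dart := fun x =>
      if h : ∃ d ∈ P.darts, d.snd = x then h.choose else d₀ with hf
    have hAcard : k ≤ A.card := by
      have hmaps : ∀ x ∈ hfinu.toFinset, f x ∈ A := by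
        intro x hx
        have hadj : G.Adj u x := hfinu.mem_toFinset.mp hx
        have hex : ∃ d ∈ P.darts, d.snd = x :=
          aux_dart_snd P x (aux_nbrs_on_path hP hmax hadj) (G.ne_of_adj hadj).symm
        rw [hf]
        simp only [hex, dif_pos]
        obtain ⟨hd1, hd2⟩ := hex.choose_spec
        rw [hA]
        refine Finset.mem_filter.mpr ⟨List.mem_toFinset.mpr hd1, ?_⟩
        rw [hd2]; exact hadj
      have hsnd : ∀ x ∈ hfinu.toFinset, (f x).snd = x := by
        intro x hx
        have hadj : G.Adj u x := hfinu.mem_toFinset.mp hx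
        have hex : ∃ d ∈ P.darts, d.snd = x :=
          aux_dart_snd P x (aux_nbrs_on_path hP hmax hadj) (G.ne_of_adj hadj).symm
        rw [hf]
        simp only [hex, dif_pos]
        exact hex.choose_spec.2
      have hinj : Set.InjOn f hfinu.toFinset := by
        intro x hx y hy hxy
        rw [← hsnd x hx, ← hsnd y hy, hxy]
      have h1 := Finset.card_le_card_of_injOn f hmaps hinj
      have h2 : hfinu.toFinset.card = (G.neighborSet u).ncard :=
        (Set.ncard_eq_toFinset_card _ hfinu).symm
      have := aux_mindeg hconn u
      omega
    set g : V → G.Dart := fun x =>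
      if h : ∃ d ∈ P.darts, d.fst = x then h.choose else d₀ with hg
    have hBcard : k ≤ B.card := by
      have hmaps : ∀ x ∈ hfinv.toFinset, g x ∈ B := by
        intro x hx
        have hadj : G.Adj v x := hfinv.mem_toFinset.mp hx
        have hex : ∃ d ∈ P.darts, d.fst = x :=
          aux_dart_fst P x (hnbrv x hadj) (G.ne_of_adj hadj).symm
        rw [hg]
        simp only [hex, dif_pos]
        obtain ⟨hd1, hd2⟩ := hex.choose_spec
        rw [hB]
        refine Finset.mem_filter.mpr ⟨List.mem_toFinset.mpr hd1, ?_⟩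
        rw [hd2]; exact hadj
      have hfst : ∀ x ∈ hfinv.toFinset, (g x).fst = x := by
        intro x hx
        have hadj : G.Adj v x := hfinv.mem_toFinset.mp hx
        have hex : ∃ d ∈ P.darts, d.fst = x :=
          aux_dart_fst P x (hnbrv x hadj) (G.ne_of_adj hadj).symm
        rw [hg]
        simp only [hex, dif_pos]
        exact hex.choose_spec.2
      have hinj : Set.InjOn g hfinv.toFinset := by
        intro x hx y hy hxy
        rw [← hfst x hx, ← hfst y hy, hxy]
      have h1 := Finset.card_le_card_of_injOn g hmaps hinj
      have h2 : hfinv.toFinset.card = (G.neighborSet v).ncard :=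
        (Set.ncard_eq_toFinset_card _ hfinv).symm
      have := aux_mindeg hconn v
      omega
    -- A and B intersect
    have hABsub : A ∪ B ⊆ DF := by
      intro d hd
      rcases Finset.mem_union.mp hd with h | h
      · exact (Finset.mem_filter.mp h).1
      · exact (Finset.mem_filter.mp h).1
    have hunion : (A ∪ B).card ≤ m := le_trans (Finset.card_le_card hABsub) (le_of_eq hDFcard)
    have hsum : (A ∪ B).card + (A ∩ B).card = A.card + B.card :=
      Finset.card_union_add_card_inter A B
    have hABne : (A ∩ B).Nonempty := by
      rw [← Finset.card_pos]
      omega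
    obtain ⟨d, hdAB⟩ := hABne
    have hdA := Finset.mem_filter.mp (Finset.mem_of_mem_inter_left hdAB)
    have hdB := Finset.mem_filter.mp (Finset.mem_of_mem_inter_right hdAB)
    have hdP : d ∈ P.darts := List.mem_toFinset.mp hdA.1
    have hud : G.Adj u d.snd := hdA.2
    have hvd : G.Adj v d.fst := hdB.2
    -- split the path at the dart
    obtain ⟨T, D', hPeq⟩ := aux_split P d hdP
    have hsupp : P.support = T.support ++ D'.support := by
      rw [hPeq, Walk.support_append, Walk.support_cons]
      simp
    have hnd : (T.support ++ D'.support).Nodup := hsupp ▸ hsuppnd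
    have hdisj : List.Disjoint T.support D'.support :=
      fun a ha hb => ((List.nodup_append).mp hnd).2.2 a ha a hb rfl
    have hTnd : T.support.Nodup := ((List.nodup_append).mp hnd).1
    have hDnd : D'.support.Nodup := ((List.nodup_append).mp hnd).2.1
    have hmsum : m = T.length + 1 + D'.length := by
      have := congrArg Walk.length hPeq
      rw [Walk.length_append, Walk.length_cons] at this
      omega
    -- the inner walk of the cycle
    set Winner : G.Walk d.snd u := D'.append (Walk.cons hvd T.reverse) with hW
    have hWsupp : Winner.support = D'.support ++ T.support.reverse := by
      rw [hW, Walk.support_append, Walk.support_cons]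
      simp [Walk.support_reverse]
    have hWlen : Winner.length = m := by
      rw [hW, Walk.length_append, Walk.length_cons, Walk.length_reverse]
      omega
    have hWperm : (D'.support ++ T.support.reverse).Perm (T.support ++ D'.support) :=
      (List.perm_append_comm).trans ((T.support.reverse_perm).append_right _)
    have hWpath : Winner.IsPath := by
      rw [Walk.isPath_def, hWsupp]
      exact hWperm.nodup_iff.mpr hnd
    -- membership transfers
    have hTmem : ∀ x, x ∈ T.support → x ∈ P.support := by
      intro x hx; rw [hsupp]; exact List.mem_append_left _ hx
    have hDmem : ∀ x, x ∈ D'.support → x ∈ P.support := by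
      intro x hx; rw [hsupp]; exact List.mem_append_right _ hx
    have hWmem : ∀ x, x ∈ Winner.support → x ∈ P.support := by
      intro x hx
      rw [hWsupp] at hx
      rcases List.mem_append.mp hx with h | h
      · exact hDmem x h
      · exact hTmem x (List.mem_reverse.mp h)
    have hWmem' : ∀ x, x ∈ P.support → x ∈ Winner.support := by
      intro x hx
      rw [hWsupp]
      rw [hsupp] at hx
      rcases List.mem_append.mp hx with h | h
      · exact List.mem_append_right _ (List.mem_reverse.mpr h)
      · exact List.mem_append_left _ h
    -- the cycle
    have hedge : s(u, d.snd) ∉ Winner.edges := by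
      intro hmem
      rw [hW, Walk.edges_append, Walk.edges_cons] at hmem
      rcases List.mem_append.mp hmem with h | h
      · -- u would be on D'
        have : u ∈ D'.support := D'.fst_mem_support_of_mem_edges h
        exact hdisj T.start_mem_support this
      · rcases List.mem_cons.mp h with h | h
        · -- s(u, d.snd) = s(v, d.fst)
          rw [Sym2.eq_iff] at h
          rcases h with ⟨h1, h2⟩ | ⟨h1, h2⟩
          · -- u = v
            subst h1
            exact hdisj T.start_mem_support D'.end_mem_support
          · -- u = d.fst ∧ d.snd = v : both T and D' trivial, so m = 1
            have hT0 : T.length = 0 := by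
              have hTP : T.IsPath := Walk.isPath_def _ |>.mpr hTnd
              have := (Walk.isPath_iff_eq_nil (p := T.copy rfl h1.symm)).mp
                ((Walk.isPath_copy T rfl h1.symm).mpr hTP)
              have := congrArg Walk.length this
              simpa using this
            have hD0 : D'.length = 0 := by
              have hDP : D'.IsPath := Walk.isPath_def _ |>.mpr hDnd
              have := (Walk.isPath_iff_eq_nil (p := D'.copy h2 rfl)).mp
                ((Walk.isPath_copy D' h2 rfl).mpr hDP)
              have := congrArg Walk.length this
              simpa using this
            omega
        · -- d.snd would be on T
          rw [Walk.edges_reverse, List.mem_reverse] at h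
          have : d.snd ∈ T.support := T.snd_mem_support_of_mem_edges h
          exact hdisj this D'.start_mem_support
    set C : G.Walk u u := Walk.cons hud Winner with hC
    have hCcyc : C.IsCycle := (Walk.cons_isCycle_iff _ _).mpr ⟨hWpath, hedge⟩
    have hCtail : C.support.tail = Winner.support := by
      rw [hC, Walk.support_cons, List.tail_cons]
    have hClen : C.length = m + 1 := by
      rw [hC, Walk.length_cons, hWlen]
    -- rotate at b
    have hbC : b ∈ C.support := by
      rw [hC, Walk.support_cons]
      exact List.mem_cons_of_mem _ (hWmem' b hbL)
    set C' : G.Walk b b := C.rotate b hbC with hC'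
    have hC'cyc : C'.IsCycle := hCcyc.rotate hbC
    have hrot : C'.support.tail ~r C.support.tail := Walk.support_rotate C b hbC
    have hperm : C'.support.tail.Perm C.support.tail := hrot.perm
    have hC'len : C'.length = C.length := by
      have h1 : C'.support.tail.length = C.support.tail.length := hperm.length_eq
      have h2 : C'.support.length = C'.length + 1 := C'.length_support
      have h3 : C.support.length = C.length + 1 := C.length_support
      have h4 : C'.support.tail.length = C'.support.length - 1 := List.length_tail
      have h5 : C.support.tail.length = C.support.length - 1 := List.length_tail
      omega
    obtain ⟨c, hbc, q, hq⟩ := Walk.not_nil_iff.mp hC'cyc.not_nil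
    have hqcyc : (Walk.cons hbc q).IsCycle := hq ▸ hC'cyc
    have hqpath : q.IsPath := ((Walk.cons_isCycle_iff _ _).mp hqcyc).1
    have hqsupp : q.support = C'.support.tail := by
      rw [hq, Walk.support_cons, List.tail_cons]
    have haq : a ∉ q.support := by
      intro hmem
      rw [hqsupp] at hmem
      have := hperm.mem_iff.mp hmem
      rw [hCtail] at this
      exact haL (hWmem a this)
    -- extend q by the edge b→a to get a path longer than P
    set F : G.Walk c a := q.append (Walk.cons hab.symm Walk.nil) with hF
    have hFpath : F.IsPath := by
      rw [Walk.isPath_def, hF, Walk.support_append, Walk.support_cons]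
      simp only [Walk.support_nil, List.tail_cons]
      rw [List.nodup_append]
      refine ⟨hqpath.support_nodup, List.nodup_singleton a, ?_⟩
      intro x hx y hy hxy
      rw [List.mem_singleton] at hy
      subst hy
      subst hxy
      exact haq hx
    have hFlen : F.length = m + 1 := by
      have hqlen : q.length + 1 = C'.length := by
        have := congrArg Walk.length hq
        rw [Walk.length_cons] at this
        omega
      rw [hF, Walk.length_append, Walk.length_cons, Walk.length_nil]
      omega
    have := hmax _ _ _ hFpath
    rw [hFlen] at this
    omega

end StepB

/-- Let `G` be a `k`-connected graph on `n` vertices with `k ≥ (n − 2)/3`.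
Then every two longest paths in `G` intersect in at least `k` vertices. -/
theorem stmt_2 {V : Type*} [Fintype V] {G : SimpleGraph V} (k n : ℕ)
    (hn : Fintype.card V = n)
    (hconn : KConnected G k)
    (hk : ((n : ℝ) - 2) / 3 ≤ (k : ℝ))
    {p₁ p₂ q₁ q₂ : V} (P : G.Walk p₁ p₂) (Q : G.Walk q₁ q₂)
    (hP : P.IsPath) (hQ : Q.IsPath)
    (hPmax : ∀ (u v : V) (W : G.Walk u v), W.IsPath → W.length ≤ P.length)
    (hQmax : ∀ (u v : V) (W : G.Walk u v), W.IsPath → W.length ≤ Q.length) :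
    k ≤ ({x | x ∈ P.support} ∩ {x | x ∈ Q.support}).ncard := by
  classical
  rcases Nat.eq_zero_or_pos k with rfl | hkpos
  · exact Nat.zero_le _
  set SP : Finset V := P.support.toFinset with hSP
  set SQ : Finset V := Q.support.toFinset with hSQ
  have hset : ({x | x ∈ P.support} ∩ {x | x ∈ Q.support}) = ↑(SP ∩ SQ) := by
    ext x
    simp [hSP, hSQ, List.mem_toFinset]
  rw [hset, Set.ncard_coe_finset]
  have hSPcard : SP.card = P.length + 1 := by
    rw [hSP, List.toFinset_card_of_nodup hP.support_nodup, P.length_support]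
  have hSQcard : SQ.card = Q.length + 1 := by
    rw [hSQ, List.toFinset_card_of_nodup hQ.support_nodup, Q.length_support]
  have hklbP : k + 1 ≤ SP.card := aux_support_card_lb hconn hP hPmax
  have hklbQ : k + 1 ≤ SQ.card := aux_support_card_lb hconn hQ hQmax
  have hn3 : n ≤ 3 * k + 2 := by
    have h1 : (n : ℝ) ≤ 3 * k + 2 := by linarith
    have h2 : (n : ℝ) ≤ ((3 * k + 2 : ℕ) : ℝ) := by push_cast; linarith
    exact_mod_cast h2
  by_cases hPshort : P.length + 1 ≤ 2 * k
  · -- P is spanning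
    have hspan := aux_spanning hconn hkpos P hP hPmax hPshort
    have hSPuniv : SP = Finset.univ := by
      ext x; simp [hSP, List.mem_toFinset, hspan x]
    rw [hSPuniv, Finset.univ_inter]
    omega
  · by_cases hQshort : Q.length + 1 ≤ 2 * k
    · have hspan := aux_spanning hconn hkpos Q hQ hQmax hQshort
      have hSQuniv : SQ = Finset.univ := by
        ext x; simp [hSQ, List.mem_toFinset, hspan x]
      rw [hSQuniv, Finset.inter_univ]
      omega
    · -- both long: inclusion-exclusion
      push_neg at hPshort hQshort
      have h1 : 2 * k + 1 ≤ SP.card := by omega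
      have h2 : 2 * k + 1 ≤ SQ.card := by omega
      have hsum : (SP ∪ SQ).card + (SP ∩ SQ).card = SP.card + SQ.card :=
        Finset.card_union_add_card_inter SP SQ
      have hun : (SP ∪ SQ).card ≤ n := by
        rw [← hn]
        exact Finset.card_le_univ _
      omega
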